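/- Let L = F_2(t), F = F_2(t^2), K = F_2(t^4). Then the sequence of (L,L)-bimodules 0 → L ⊗_F L → L ⊗_K L → L ⊗_F L → 0, where the first map sends 1⊗1 to t^2⊗1 + 1⊗t^2 and the second sends 1⊗1 to 1⊗1, is exact and does not split; moreover L ⊗_K L is isomorphic as an L-algebra (via L⊗1) to L[X]/(X^4) under X ↦ t⊗1 + 1⊗t, and in particular L ⊗_K L is an indecomposable (L,L)-bimodule. -/

import Mathlib

open TensorProduct

set_option maxHeartbeats 1000000
set_option synthInstance.maxHeartbeats 400000

/-- `L = 𝔽₂(t)`. -/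
noncomputable abbrev Ltwo := RatFunc (ZMod 2)

/-- `F = 𝔽₂(t²)` as a subfield of `L`. -/
noncomputable abbrev Fmid : Subfield Ltwo := Subfield.closure {RatFunc.X ^ 2}

/-- `K = 𝔽₂(t⁴)` as a subfield of `L`. -/
noncomputable abbrev Kbot : Subfield Ltwo := Subfield.closure {RatFunc.X ^ 4}

open Polynomial
open Module

noncomputable def AdjoinRoot.liftHom {R S : Type*} [CommRing R] [CommRing S] [Algebra R S]
    (f : R[X]) (x : S) (hfx : aeval x f = 0) : AdjoinRoot f →ₐ[R] S :=
  AdjoinRoot.liftAlgHom f (Algebra.ofId R S) x (by rwa [aeval_def] at hfx)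

theorem AdjoinRoot.liftHom_root {R S : Type*} [CommRing R] [CommRing S] [Algebra R S]
    {f : R[X]} (x : S) (hfx : aeval x f = 0) : AdjoinRoot.liftHom f x hfx (AdjoinRoot.root f) = x :=
  AdjoinRoot.liftAlgHom_root _ _ _ _

theorem AdjoinRoot.liftHom_mk {R S : Type*} [CommRing R] [CommRing S] [Algebra R S]
    {f : R[X]} (x : S) (hfx : aeval x f = 0) {g : R[X]} :
    AdjoinRoot.liftHom f x hfx (AdjoinRoot.mk f g) = aeval x g :=
  rfl

lemma zmod2_cases : ∀ a : ZMod 2, a = 0 ∨ a = 1 := by decide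

lemma mem_of_expand {S : Subfield Ltwo} {n : ℕ} (hX : (RatFunc.X : Ltwo)^n ∈ S)
    (P : Polynomial (ZMod 2)) : algebraMap (Polynomial (ZMod 2)) Ltwo (expand _ n P) ∈ S := by
  induction P using Polynomial.induction_on' with
  | add p q hp hq => rw [map_add, map_add]; exact S.add_mem hp hq
  | monomial m a =>
    rw [Polynomial.expand_monomial, ← Polynomial.C_mul_X_pow_eq_monomial, map_mul, map_pow]
    rcases zmod2_cases a with h | h
    · subst h; rw [map_zero, map_zero, zero_mul]; exact S.zero_mem
    · subst h
      rw [map_one, map_one, one_mul, RatFunc.algebraMap_X, mul_comm m n, pow_mul]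
      exact S.pow_mem hX m

lemma expand_injective (n : ℕ) (hn : 0 < n) :
    Function.Injective ((algebraMap (Polynomial (ZMod 2)) Ltwo).comp
      (Polynomial.expand (ZMod 2) n).toRingHom) := by
  intro a b h
  simp only [RingHom.comp_apply] at h
  have h3 : Polynomial.expand (ZMod 2) n a = Polynomial.expand (ZMod 2) n b :=
    RatFunc.algebraMap_injective (ZMod 2) h
  have h4 := sub_eq_zero.mpr h3
  rw [← map_sub] at h4
  exact sub_eq_zero.mp ((Polynomial.expand_eq_zero hn).mp h4)

noncomputable def sig (n : ℕ) (hn : 0 < n) : Ltwo →+* Ltwo :=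
  IsFractionRing.lift (expand_injective n hn)

lemma sig_algebraMap (n : ℕ) (hn : 0 < n) (P : Polynomial (ZMod 2)) :
    sig n hn (algebraMap _ _ P) = algebraMap (Polynomial (ZMod 2)) Ltwo (expand _ n P) :=
  IsFractionRing.lift_algebraMap _ _

lemma Fmid_le_range : Fmid ≤ (sig 2 two_pos).fieldRange := by
  rw [Subfield.closure_le]
  rintro x rfl
  refine ⟨RatFunc.X, ?_⟩
  rw [← RatFunc.algebraMap_X (K := ZMod 2), sig_algebraMap, Polynomial.expand_X, map_pow,
    RatFunc.algebraMap_X]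

lemma Kbot_le_range : Kbot ≤ (sig 4 four_pos).fieldRange := by
  rw [Subfield.closure_le]
  rintro x rfl
  refine ⟨RatFunc.X, ?_⟩
  rw [← RatFunc.algebraMap_X (K := ZMod 2), sig_algebraMap, Polynomial.expand_X, map_pow,
    RatFunc.algebraMap_X]

lemma mem_range_frac {n : ℕ} {hn : 0 < n} {x : Ltwo} (h : x ∈ (sig n hn).fieldRange) :
    ∃ P Q : Polynomial (ZMod 2), Q ≠ 0 ∧
      x * algebraMap (Polynomial (ZMod 2)) Ltwo (expand _ n Q)
        = algebraMap (Polynomial (ZMod 2)) Ltwo (expand _ n P) := by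
  obtain ⟨y, rfl⟩ := h
  obtain ⟨p, q, hq, hdiv⟩ := IsFractionRing.div_surjective (A := Polynomial (ZMod 2)) y
  refine ⟨p, q, nonZeroDivisors.ne_zero hq, ?_⟩
  rw [← hdiv, map_div₀, sig_algebraMap, sig_algebraMap]
  have hq0 : algebraMap (Polynomial (ZMod 2)) Ltwo (expand _ n q) ≠ 0 := by
    intro h0
    exact nonZeroDivisors.ne_zero hq ((Polynomial.expand_eq_zero hn).mp
      (RatFunc.algebraMap_injective (ZMod 2) (by rw [h0, map_zero])))
  field_simp

lemma X_notMem_Fmid : RatFunc.X ∉ Fmid := by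
  intro h
  obtain ⟨P, Q, hQ, he⟩ := mem_range_frac (Fmid_le_range h)
  rw [← RatFunc.algebraMap_X (K := ZMod 2), ← map_mul] at he
  have := RatFunc.algebraMap_injective (ZMod 2) he
  have hP : P ≠ 0 := by
    rintro rfl
    rw [map_zero] at this
    rcases mul_eq_zero.mp this with h1 | h1
    · exact Polynomial.X_ne_zero h1
    · exact hQ ((Polynomial.expand_eq_zero two_pos).mp h1)
  have hd := congrArg Polynomial.natDegree this
  rw [Polynomial.natDegree_mul Polynomial.X_ne_zero
      (fun h1 => hQ ((Polynomial.expand_eq_zero two_pos).mp h1)),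
    Polynomial.natDegree_X, Polynomial.natDegree_expand, Polynomial.natDegree_expand] at hd
  omega

lemma X2_notMem_Kbot : RatFunc.X ^ 2 ∉ Kbot := by
  intro h
  obtain ⟨P, Q, hQ, he⟩ := mem_range_frac (Kbot_le_range h)
  rw [← RatFunc.algebraMap_X (K := ZMod 2), ← map_pow, ← map_mul] at he
  have := RatFunc.algebraMap_injective (ZMod 2) he
  have hX2 : (Polynomial.X : Polynomial (ZMod 2)) ^ 2 ≠ 0 := pow_ne_zero _ Polynomial.X_ne_zero
  have hd := congrArg Polynomial.natDegree this
  rw [Polynomial.natDegree_mul hX2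
      (fun h1 => hQ ((Polynomial.expand_eq_zero four_pos).mp h1)),
    Polynomial.natDegree_X_pow, Polynomial.natDegree_expand, Polynomial.natDegree_expand] at hd
  have hP : P ≠ 0 := by
    rintro rfl
    rw [map_zero] at this
    rcases mul_eq_zero.mp this with h1 | h1
    · exact hX2 h1
    · exact hQ ((Polynomial.expand_eq_zero four_pos).mp h1)
  omega

lemma frob_id : frobenius (ZMod 2) 2 = RingHom.id (ZMod 2) := by
  ext x
  rw [frobenius_def, RingHom.id_apply]
  revert x; decide

lemma expand_two_eq (Q : Polynomial (ZMod 2)) : expand (ZMod 2) 2 Q = Q ^ 2 := by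
  have h := Polynomial.map_frobenius_expand (R := ZMod 2) (p := 2) Q
  rwa [frob_id, Polynomial.map_id] at h

lemma decomp (N : Polynomial (ZMod 2)) :
    ∃ N₀ N₁, N = expand (ZMod 2) 2 N₀ + X * expand (ZMod 2) 2 N₁ := by
  induction N using Polynomial.induction_on' with
  | add p q hp hq =>
    obtain ⟨p0, p1, hp⟩ := hp
    obtain ⟨q0, q1, hq⟩ := hq
    exact ⟨p0 + q0, p1 + q1, by rw [hp, hq, map_add, map_add]; ring⟩
  | monomial m a =>
    rcases Nat.even_or_odd m with ⟨k, hk⟩ | ⟨k, hk⟩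
    · refine ⟨monomial k a, 0, ?_⟩
      rw [Polynomial.expand_monomial, map_zero, mul_zero, add_zero, hk]
      have : k * 2 = k + k := by omega
      rw [this]
    · refine ⟨0, monomial k a, ?_⟩
      rw [Polynomial.expand_monomial, map_zero, zero_add, X_mul_monomial, hk]
      have : k * 2 + 1 = 2 * k + 1 := by omega
      rw [this]

lemma span_step (f : Ltwo) : ∃ P₀ P₁ Q : Polynomial (ZMod 2), Q ≠ 0 ∧
    f = algebraMap _ Ltwo (expand _ 2 P₀) / algebraMap _ Ltwo (expand _ 2 Q)
      + RatFunc.X * (algebraMap _ Ltwo (expand _ 2 P₁) / algebraMap _ Ltwo (expand _ 2 Q)) := by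
  obtain ⟨p, q, hq, hdiv⟩ := IsFractionRing.div_surjective (A := Polynomial (ZMod 2)) f
  have hq0 : q ≠ 0 := nonZeroDivisors.ne_zero hq
  obtain ⟨N₀, N₁, hN⟩ := decomp (p * q)
  refine ⟨N₀, N₁, q, hq0, ?_⟩
  have halgq : algebraMap (Polynomial (ZMod 2)) Ltwo q ≠ 0 :=
    fun h => hq0 (RatFunc.algebraMap_injective _ (by rw [h, map_zero]))
  have hEq : algebraMap (Polynomial (ZMod 2)) Ltwo (expand (ZMod 2) 2 q)
      = (algebraMap (Polynomial (ZMod 2)) Ltwo q)^2 := by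
    rw [expand_two_eq, map_pow]
  have hpq : algebraMap (Polynomial (ZMod 2)) Ltwo (expand (ZMod 2) 2 N₀)
      + RatFunc.X * algebraMap (Polynomial (ZMod 2)) Ltwo (expand (ZMod 2) 2 N₁)
      = algebraMap (Polynomial (ZMod 2)) Ltwo p * algebraMap (Polynomial (ZMod 2)) Ltwo q := by
    rw [← map_mul, hN, map_add, map_mul, RatFunc.algebraMap_X]
  rw [← hdiv, hEq]
  field_simp
  linear_combination -hpq

lemma mem_span_F (f : Ltwo) : ∃ a b : Ltwo, a ∈ Fmid ∧ b ∈ Fmid ∧ f = a + RatFunc.X * b := by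
  obtain ⟨P₀, P₁, Q, hQ, hf⟩ := span_step f
  have hX2 : (RatFunc.X : Ltwo)^2 ∈ Fmid := Subfield.subset_closure rfl
  exact ⟨_, _, Fmid.div_mem (mem_of_expand hX2 P₀) (mem_of_expand hX2 Q),
    Fmid.div_mem (mem_of_expand hX2 P₁) (mem_of_expand hX2 Q), hf⟩

lemma mem_span_K {g : Ltwo} (hg : g ∈ Fmid) :
    ∃ c d : Ltwo, c ∈ Kbot ∧ d ∈ Kbot ∧ g = c + RatFunc.X^2 * d := by
  obtain ⟨y, rfl⟩ := Fmid_le_range hg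
  obtain ⟨P₀, P₁, Q, hQ, hy⟩ := span_step y
  have hX4 : (RatFunc.X : Ltwo)^4 ∈ Kbot := Subfield.subset_closure rfl
  have hs : ∀ P : Polynomial (ZMod 2),
      sig 2 two_pos (algebraMap _ Ltwo (expand (ZMod 2) 2 P))
        = algebraMap (Polynomial (ZMod 2)) Ltwo (expand (ZMod 2) 4 P) := by
    intro P
    rw [sig_algebraMap, Polynomial.expand_expand]
  have hsX : sig 2 two_pos RatFunc.X = RatFunc.X ^ 2 := by
    rw [← RatFunc.algebraMap_X (K := ZMod 2), sig_algebraMap, Polynomial.expand_X, map_pow,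
      RatFunc.algebraMap_X]
  refine ⟨_, _, Kbot.div_mem (mem_of_expand hX4 P₀) (mem_of_expand hX4 Q),
    Kbot.div_mem (mem_of_expand hX4 P₁) (mem_of_expand hX4 Q), ?_⟩
  rw [hy, map_add, map_div₀, map_mul, map_div₀, hs, hs, hs, hsX]

lemma mem_span_K4 (f : Ltwo) : ∃ c : Fin 4 → Ltwo, (∀ i, c i ∈ Kbot) ∧
    f = c 0 + RatFunc.X * c 1 + RatFunc.X^2 * c 2 + RatFunc.X^3 * c 3 := by
  obtain ⟨a, b, ha, hb, hf⟩ := mem_span_F f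
  obtain ⟨c0, c2, hc0, hc2, ha2⟩ := mem_span_K ha
  obtain ⟨c1, c3, hc1, hc3, hb2⟩ := mem_span_K hb
  exact ⟨![c0, c1, c2, c3], by intro i; fin_cases i <;> assumption, by
    simp only [Matrix.cons_val_zero, Matrix.cons_val_one, Matrix.head_cons,
      Matrix.cons_val_two, Matrix.tail_cons, Matrix.cons_val_three]
    rw [hf, ha2, hb2]; ring⟩

lemma Kbot_le_Fmid : Kbot ≤ Fmid := by
  rw [Subfield.closure_le]
  rintro x rfl
  have : (RatFunc.X : Ltwo)^4 = (RatFunc.X^2)^2 := by ring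
  rw [this]
  exact Fmid.pow_mem (Subfield.subset_closure rfl) 2

lemma ind2F {a b : Ltwo} (ha : a ∈ Fmid) (hb : b ∈ Fmid)
    (h : a + RatFunc.X * b = 0) : a = 0 ∧ b = 0 := by
  by_cases hb0 : b = 0
  · subst hb0; rw [mul_zero, add_zero] at h; exact ⟨h, rfl⟩
  · exfalso
    apply X_notMem_Fmid
    have hX : RatFunc.X = -(a * b⁻¹) := by field_simp; linear_combination h
    rw [hX]
    exact Fmid.neg_mem (Fmid.mul_mem ha (Fmid.inv_mem hb))

lemma ind2K {a b : Ltwo} (ha : a ∈ Kbot) (hb : b ∈ Kbot)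
    (h : a + RatFunc.X^2 * b = 0) : a = 0 ∧ b = 0 := by
  by_cases hb0 : b = 0
  · subst hb0; rw [mul_zero, add_zero] at h; exact ⟨h, rfl⟩
  · exfalso
    apply X2_notMem_Kbot
    have hX : RatFunc.X^2 = -(a * b⁻¹) := by field_simp; linear_combination h
    rw [hX]
    exact Kbot.neg_mem (Kbot.mul_mem ha (Kbot.inv_mem hb))

lemma ind4 {c : Fin 4 → Ltwo} (hc : ∀ i, c i ∈ Kbot)
    (h : c 0 + RatFunc.X * c 1 + RatFunc.X^2 * c 2 + RatFunc.X^3 * c 3 = 0) :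
    ∀ i, c i = 0 := by
  have hX2F : (RatFunc.X : Ltwo)^2 ∈ Fmid := Subfield.subset_closure rfl
  have hu : (c 0 + RatFunc.X^2 * c 2) + RatFunc.X * (c 1 + RatFunc.X^2 * c 3) = 0 := by
    linear_combination h
  have h2 := ind2F (Fmid.add_mem (Kbot_le_Fmid (hc 0)) (Fmid.mul_mem hX2F (Kbot_le_Fmid (hc 2))))
    (Fmid.add_mem (Kbot_le_Fmid (hc 1)) (Fmid.mul_mem hX2F (Kbot_le_Fmid (hc 3)))) hu
  have h02 := ind2K (hc 0) (hc 2) h2.1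
  have h13 := ind2K (hc 1) (hc 3) h2.2
  intro i; fin_cases i
  · exact h02.1
  · exact h13.1
  · exact h02.2
  · exact h13.2

lemma fv4_0 : ((0 : Fin 4) : ℕ) = 0 := rfl
lemma fv4_1 : ((1 : Fin 4) : ℕ) = 1 := rfl
lemma fv4_2 : ((2 : Fin 4) : ℕ) = 2 := rfl
lemma fv4_3 : ((3 : Fin 4) : ℕ) = 3 := rfl
lemma fv2_0 : ((0 : Fin 2) : ℕ) = 0 := rfl
lemma fv2_1 : ((1 : Fin 2) : ℕ) = 1 := rfl

lemma liK : LinearIndependent Kbot (fun i : Fin 4 => (RatFunc.X : Ltwo) ^ (i : ℕ)) := by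
  rw [Fintype.linearIndependent_iff]
  intro g hg i
  rw [Fin.sum_univ_four] at hg
  have hsum : (g 0 : Ltwo) + RatFunc.X * (g 1 : Ltwo)
      + RatFunc.X^2 * (g 2 : Ltwo) + RatFunc.X^3 * (g 3 : Ltwo) = 0 := by
    have h0 : ∀ (s : Kbot) (x : Ltwo), s • x = (s : Ltwo) * x := fun _ _ => rfl
    rw [h0, h0, h0, h0] at hg
    simp only [fv4_0, fv4_1, fv4_2, fv4_3] at hg
    push_cast at hg ⊢
    linear_combination hg
  have hall := ind4 (c := fun i => (g i : Ltwo)) (fun i => (g i).2) hsum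
  exact Subtype.ext (hall i)

lemma spanK : ⊤ ≤ Submodule.span Kbot (Set.range fun i : Fin 4 => (RatFunc.X : Ltwo) ^ (i : ℕ)) := by
  intro f _
  obtain ⟨c, hc, hf⟩ := mem_span_K4 f
  have m : ∀ i : Fin 4, (c i) * (RatFunc.X : Ltwo) ^ (i : ℕ)
      ∈ Submodule.span Kbot (Set.range fun i : Fin 4 => (RatFunc.X : Ltwo) ^ (i : ℕ)) := by
    intro i
    exact Submodule.smul_mem _ (⟨c i, hc i⟩ : Kbot) (Submodule.subset_span ⟨i, rfl⟩)
  have hf' : f = c 0 * (RatFunc.X:Ltwo)^((0:Fin 4):ℕ) + c 1 * (RatFunc.X:Ltwo)^((1:Fin 4):ℕ)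
      + c 2 * (RatFunc.X:Ltwo)^((2:Fin 4):ℕ) + c 3 * (RatFunc.X:Ltwo)^((3:Fin 4):ℕ) := by
    rw [hf]; simp only [fv4_0, fv4_1, fv4_2, fv4_3]; ring
  rw [hf']
  exact add_mem (add_mem (add_mem (m 0) (m 1)) (m 2)) (m 3)

noncomputable def bK : Basis (Fin 4) Kbot Ltwo := Basis.mk liK spanK

lemma bK_apply (i : Fin 4) : bK i = (RatFunc.X : Ltwo) ^ (i : ℕ) := Basis.mk_apply _ _ _

lemma liF : LinearIndependent Fmid (fun i : Fin 2 => (RatFunc.X : Ltwo) ^ (i : ℕ)) := by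
  rw [Fintype.linearIndependent_iff]
  intro g hg i
  rw [Fin.sum_univ_two] at hg
  have hsum : (g 0 : Ltwo) + RatFunc.X * (g 1 : Ltwo) = 0 := by
    have h0 : ∀ (s : Fmid) (x : Ltwo), s • x = (s : Ltwo) * x := fun _ _ => rfl
    rw [h0, h0] at hg
    simp only [fv2_0, fv2_1] at hg
    push_cast at hg ⊢
    linear_combination hg
  have h2 := ind2F (g 0).2 (g 1).2 hsum
  fin_cases i
  · exact Subtype.ext h2.1
  · exact Subtype.ext h2.2

lemma spanF : ⊤ ≤ Submodule.span Fmid (Set.range fun i : Fin 2 => (RatFunc.X : Ltwo) ^ (i : ℕ)) := by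
  intro f _
  obtain ⟨a, b, ha, hb, hf⟩ := mem_span_F f
  have m : ∀ (x : Ltwo) (hx : x ∈ Fmid) (i : Fin 2), x * (RatFunc.X : Ltwo) ^ (i : ℕ)
      ∈ Submodule.span Fmid (Set.range fun i : Fin 2 => (RatFunc.X : Ltwo) ^ (i : ℕ)) := by
    intro x hx i
    exact Submodule.smul_mem _ (⟨x, hx⟩ : Fmid) (Submodule.subset_span ⟨i, rfl⟩)
  have hf' : f = a * (RatFunc.X:Ltwo)^((0:Fin 2):ℕ) + b * (RatFunc.X:Ltwo)^((1:Fin 2):ℕ) := by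
    rw [hf]; simp only [fv2_0, fv2_1]; ring
  rw [hf']
  exact add_mem (m a ha 0) (m b hb 1)

noncomputable def bF : Basis (Fin 2) Fmid Ltwo := Basis.mk liF spanF

lemma bF_apply (i : Fin 2) : bF i = (RatFunc.X : Ltwo) ^ (i : ℕ) := Basis.mk_apply _ _ _

lemma two_eq_zero_L : (2 : Ltwo) = 0 := by
  have h1 : (RatFunc.C (1 : ZMod 2)) = (1 : Ltwo) := map_one _
  have h2 : ((1 : ZMod 2) + 1) = 0 := by decide
  rw [← one_add_one_eq_two, ← h1, ← map_add, h2, map_zero]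

lemma two_eq_zero_alg {A : Type} [CommRing A] [Algebra Ltwo A] : (2 : A) = 0 := by
  rw [← map_ofNat (algebraMap Ltwo A) 2, two_eq_zero_L, map_zero]

lemma sq_add {A : Type} [CommRing A] (h2 : (2 : A) = 0) (u v : A) :
    (u + v)^2 = u^2 + v^2 := by
  have h : (u + v)^2 = u^2 + v^2 + 2*(u*v) := by ring
  rw [h, h2, zero_mul, add_zero]

noncomputable abbrev TK := TensorProduct Kbot Ltwo Ltwo
noncomputable abbrev TF := TensorProduct Fmid Ltwo Ltwo

noncomputable def sigK : TK := RatFunc.X ⊗ₜ[Kbot] 1 + 1 ⊗ₜ[Kbot] RatFunc.X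
noncomputable def sigF : TF := RatFunc.X ⊗ₜ[Fmid] 1 + 1 ⊗ₜ[Fmid] RatFunc.X

lemma tmul_comm_K {k : Ltwo} (hk : k ∈ Kbot) (x y : Ltwo) :
    (k * x) ⊗ₜ[Kbot] y = x ⊗ₜ[Kbot] (k * y) :=
  TensorProduct.smul_tmul (⟨k, hk⟩ : Kbot) x y

lemma tmul_comm_F {k : Ltwo} (hk : k ∈ Fmid) (x y : Ltwo) :
    (k * x) ⊗ₜ[Fmid] y = x ⊗ₜ[Fmid] (k * y) :=
  TensorProduct.smul_tmul (⟨k, hk⟩ : Fmid) x y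

lemma sigK_sq : sigK^2 = (RatFunc.X^2) ⊗ₜ[Kbot] 1 + 1 ⊗ₜ[Kbot] (RatFunc.X^2) := by
  rw [sigK, sq_add two_eq_zero_alg, Algebra.TensorProduct.tmul_pow,
    Algebra.TensorProduct.tmul_pow, one_pow]

lemma double_eq_zero_K (u : TK) : u + u = 0 := by
  have h : u + u = 2 * u := by ring
  rw [h, two_eq_zero_alg, zero_mul]

lemma double_eq_zero_F (u : TF) : u + u = 0 := by
  have h : u + u = 2 * u := by ring
  rw [h, two_eq_zero_alg, zero_mul]

lemma sigK_pow4 : sigK^4 = 0 := by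
  have h : sigK^4 = (sigK^2)^2 := by ring
  rw [h, sigK_sq, sq_add two_eq_zero_alg, Algebra.TensorProduct.tmul_pow,
    Algebra.TensorProduct.tmul_pow, one_pow]
  have hx : ((RatFunc.X : Ltwo)^2)^2 = RatFunc.X^4 := by ring
  rw [hx]
  have hmem : (RatFunc.X : Ltwo)^4 ∈ Kbot := Subfield.subset_closure rfl
  have hc : ((RatFunc.X : Ltwo)^4) ⊗ₜ[Kbot] (1 : Ltwo) = 1 ⊗ₜ[Kbot] ((RatFunc.X : Ltwo)^4) := by
    simpa using tmul_comm_K hmem 1 1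
  rw [hc]
  exact double_eq_zero_K _

lemma sigF_sq : sigF^2 = 0 := by
  rw [sigF, sq_add two_eq_zero_alg, Algebra.TensorProduct.tmul_pow,
    Algebra.TensorProduct.tmul_pow, one_pow]
  have hmem : (RatFunc.X : Ltwo)^2 ∈ Fmid := Subfield.subset_closure rfl
  have hc : ((RatFunc.X : Ltwo)^2) ⊗ₜ[Fmid] (1 : Ltwo) = 1 ⊗ₜ[Fmid] ((RatFunc.X : Ltwo)^2) := by
    simpa using tmul_comm_F hmem 1 1
  rw [hc]
  exact double_eq_zero_F _

noncomputable def psiK : AdjoinRoot ((Polynomial.X : Polynomial Ltwo)^4) →ₐ[Ltwo] TK :=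
  AdjoinRoot.liftHom _ sigK (by rw [map_pow, Polynomial.aeval_X]; exact sigK_pow4)

noncomputable def psiF : AdjoinRoot ((Polynomial.X : Polynomial Ltwo)^2) →ₐ[Ltwo] TF :=
  AdjoinRoot.liftHom _ sigF (by rw [map_pow, Polynomial.aeval_X]; exact sigF_sq)

noncomputable def bTK : Basis (Fin 4) Ltwo TK := bK.baseChange Ltwo
noncomputable def bTF : Basis (Fin 2) Ltwo TF := bF.baseChange Ltwo

lemma hXK4 : ((Polynomial.X : Polynomial Ltwo)^4) ≠ 0 := pow_ne_zero _ Polynomial.X_ne_zero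
lemma hXF2 : ((Polynomial.X : Polynomial Ltwo)^2) ≠ 0 := pow_ne_zero _ Polynomial.X_ne_zero

noncomputable def pbK : PowerBasis Ltwo (AdjoinRoot ((Polynomial.X : Polynomial Ltwo)^4)) :=
  AdjoinRoot.powerBasis hXK4
noncomputable def pbF : PowerBasis Ltwo (AdjoinRoot ((Polynomial.X : Polynomial Ltwo)^2)) :=
  AdjoinRoot.powerBasis hXF2

lemma psiK_root : psiK (AdjoinRoot.root ((Polynomial.X : Polynomial Ltwo)^4)) = sigK :=
  AdjoinRoot.liftHom_root _ _

lemma psiK_root_mem : (1 : Ltwo) ⊗ₜ[Kbot] RatFunc.X ∈ psiK.range := by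
  have hcomm : psiK (algebraMap Ltwo _ RatFunc.X) = RatFunc.X ⊗ₜ[Kbot] 1 := by
    rw [AlgHom.commutes]
    rfl
  have key : psiK (AdjoinRoot.root ((Polynomial.X : Polynomial Ltwo)^4)
      - algebraMap Ltwo _ RatFunc.X) = 1 ⊗ₜ[Kbot] RatFunc.X := by
    rw [map_sub psiK, psiK_root, hcomm, sigK]
    abel
  exact ⟨_, key⟩

lemma psiF_root : psiF (AdjoinRoot.root ((Polynomial.X : Polynomial Ltwo)^2)) = sigF :=
  AdjoinRoot.liftHom_root _ _

lemma psiF_root_mem : (1 : Ltwo) ⊗ₜ[Fmid] RatFunc.X ∈ psiF.range := by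
  have hcomm : psiF (algebraMap Ltwo _ RatFunc.X) = RatFunc.X ⊗ₜ[Fmid] 1 := by
    rw [AlgHom.commutes]
    rfl
  have key : psiF (AdjoinRoot.root ((Polynomial.X : Polynomial Ltwo)^2)
      - algebraMap Ltwo _ RatFunc.X) = 1 ⊗ₜ[Fmid] RatFunc.X := by
    rw [map_sub psiF, psiF_root, hcomm, sigF]
    abel
  exact ⟨_, key⟩

lemma psiK_surj : Function.Surjective psiK := by
  intro x
  have hb : ∀ i : Fin 4, bTK i ∈ Subalgebra.toSubmodule psiK.range := by
    intro i
    rw [bTK, Basis.baseChange_apply, bK_apply]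
    have h : (1 : Ltwo) ⊗ₜ[Kbot] ((RatFunc.X : Ltwo)^(i:ℕ))
        = ((1 : Ltwo) ⊗ₜ[Kbot] (RatFunc.X : Ltwo))^(i:ℕ) := by
      rw [Algebra.TensorProduct.tmul_pow, one_pow]
    rw [Subalgebra.mem_toSubmodule, h]
    exact pow_mem psiK_root_mem _
  have hx : x ∈ Subalgebra.toSubmodule psiK.range := by
    have htop := bTK.span_eq
    have hle : Submodule.span Ltwo (Set.range bTK) ≤ Subalgebra.toSubmodule psiK.range := by
      rw [Submodule.span_le]
      rintro _ ⟨i, rfl⟩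
      exact hb i
    rw [htop] at hle
    exact hle Submodule.mem_top
  exact hx

lemma psiF_surj : Function.Surjective psiF := by
  intro x
  have hb : ∀ i : Fin 2, bTF i ∈ Subalgebra.toSubmodule psiF.range := by
    intro i
    rw [bTF, Basis.baseChange_apply, bF_apply]
    have h : (1 : Ltwo) ⊗ₜ[Fmid] ((RatFunc.X : Ltwo)^(i:ℕ))
        = ((1 : Ltwo) ⊗ₜ[Fmid] (RatFunc.X : Ltwo))^(i:ℕ) := by
      rw [Algebra.TensorProduct.tmul_pow, one_pow]
    rw [Subalgebra.mem_toSubmodule, h]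
    exact pow_mem psiF_root_mem _
  have hx : x ∈ Subalgebra.toSubmodule psiF.range := by
    have htop := bTF.span_eq
    have hle : Submodule.span Ltwo (Set.range bTF) ≤ Subalgebra.toSubmodule psiF.range := by
      rw [Submodule.span_le]
      rintro _ ⟨i, rfl⟩
      exact hb i
    rw [htop] at hle
    exact hle Submodule.mem_top
  exact hx

instance : Module.Finite Ltwo TK := Module.Finite.of_basis bTK
instance : Module.Finite Ltwo TF := Module.Finite.of_basis bTF
noncomputable instance : Module.Finite Ltwo (AdjoinRoot ((Polynomial.X : Polynomial Ltwo)^4)) :=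
  Module.Finite.of_basis pbK.basis
noncomputable instance : Module.Finite Ltwo (AdjoinRoot ((Polynomial.X : Polynomial Ltwo)^2)) :=
  Module.Finite.of_basis pbF.basis

lemma psiK_inj : Function.Injective psiK := by
  have hfr : Module.finrank Ltwo (AdjoinRoot ((Polynomial.X : Polynomial Ltwo)^4))
      = Module.finrank Ltwo TK := by
    rw [Module.finrank_eq_card_basis pbK.basis, Module.finrank_eq_card_basis bTK]
    simp [pbK, AdjoinRoot.powerBasis]
  exact (LinearMap.injective_iff_surjective_of_finrank_eq_finrank hfr
    (f := psiK.toLinearMap)).mpr psiK_surj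

lemma psiF_inj : Function.Injective psiF := by
  have hfr : Module.finrank Ltwo (AdjoinRoot ((Polynomial.X : Polynomial Ltwo)^2))
      = Module.finrank Ltwo TF := by
    rw [Module.finrank_eq_card_basis pbF.basis, Module.finrank_eq_card_basis bTF]
    simp [pbF, AdjoinRoot.powerBasis]
  exact (LinearMap.injective_iff_surjective_of_finrank_eq_finrank hfr
    (f := psiF.toLinearMap)).mpr psiF_surj

noncomputable def eK : AdjoinRoot ((Polynomial.X : Polynomial Ltwo)^4) ≃ₐ[Ltwo] TK :=
  AlgEquiv.ofBijective psiK ⟨psiK_inj, psiK_surj⟩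

noncomputable def eF : AdjoinRoot ((Polynomial.X : Polynomial Ltwo)^2) ≃ₐ[Ltwo] TF :=
  AlgEquiv.ofBijective psiF ⟨psiF_inj, psiF_surj⟩

lemma eK_apply (x) : eK x = psiK x := rfl
lemma eF_apply (x) : eF x = psiF x := rfl


noncomputable abbrev AK := AdjoinRoot ((Polynomial.X : Polynomial Ltwo)^4)
noncomputable abbrev BF := AdjoinRoot ((Polynomial.X : Polynomial Ltwo)^2)

lemma rootF_sq : (AdjoinRoot.root ((Polynomial.X : Polynomial Ltwo)^2))^2 = 0 := by
  have h := AdjoinRoot.mk_self (f := (Polynomial.X : Polynomial Ltwo)^2)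
  rwa [map_pow, AdjoinRoot.mk_X] at h

lemma rootK_pow4 : (AdjoinRoot.root ((Polynomial.X : Polynomial Ltwo)^4))^4 = 0 := by
  have h := AdjoinRoot.mk_self (f := (Polynomial.X : Polynomial Ltwo)^4)
  rwa [map_pow, AdjoinRoot.mk_X] at h

noncomputable def pAB : AK →ₐ[Ltwo] BF :=
  AdjoinRoot.liftHom _ (AdjoinRoot.root _) (by
    rw [map_pow, Polynomial.aeval_X]
    have h : (AdjoinRoot.root ((Polynomial.X : Polynomial Ltwo)^2))^4
        = ((AdjoinRoot.root ((Polynomial.X : Polynomial Ltwo)^2))^2)^2 := by ring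
    rw [h, rootF_sq]
    ring)

lemma pAB_mk (q : Polynomial Ltwo) :
    pAB (AdjoinRoot.mk _ q) = AdjoinRoot.mk _ q :=
  (AdjoinRoot.liftHom_mk _ _).trans (AdjoinRoot.aeval_eq q)

lemma pAB_surj : Function.Surjective pAB := by
  intro y
  obtain ⟨q, rfl⟩ := AdjoinRoot.mk_surjective y
  exact ⟨AdjoinRoot.mk _ q, pAB_mk q⟩

lemma ker_pAB {w : AK} (hw : pAB w = 0) :
    ∃ r, w = AdjoinRoot.mk _ ((Polynomial.X : Polynomial Ltwo)^2 * r) := by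
  obtain ⟨q, rfl⟩ := AdjoinRoot.mk_surjective w
  rw [pAB_mk] at hw
  obtain ⟨r, hr⟩ := (AdjoinRoot.mk_eq_zero).mp hw
  exact ⟨r, by rw [hr]⟩

lemma rootK_sq_ker {w : AK} (hw : pAB w = 0) :
    (AdjoinRoot.root ((Polynomial.X : Polynomial Ltwo)^4))^2 * w = 0 := by
  obtain ⟨r, rfl⟩ := ker_pAB hw
  rw [← AdjoinRoot.mk_X, ← map_pow, ← map_mul, AdjoinRoot.mk_eq_zero]
  exact ⟨r, by ring⟩

lemma dimF : pbF.dim = 2 := by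
  show ((Polynomial.X : Polynomial Ltwo)^2).natDegree = 2
  exact Polynomial.natDegree_X_pow 2

lemma dimK : pbK.dim = 4 := by
  show ((Polynomial.X : Polynomial Ltwo)^4).natDegree = 4
  exact Polynomial.natDegree_X_pow 4

noncomputable def bBF : Basis (Fin 2) Ltwo BF := pbF.basis.reindex (finCongr dimF)
noncomputable def bAK : Basis (Fin 4) Ltwo AK := pbK.basis.reindex (finCongr dimK)

lemma bBF_apply (i : Fin 2) :
    bBF i = (AdjoinRoot.root ((Polynomial.X : Polynomial Ltwo)^2))^(i:ℕ) := by
  rw [bBF, Basis.reindex_apply, pbF.basis_eq_pow]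
  simp [pbF, AdjoinRoot.powerBasis_gen, Fin.coe_cast]
  rfl

lemma bAK_apply (i : Fin 4) :
    bAK i = (AdjoinRoot.root ((Polynomial.X : Polynomial Ltwo)^4))^(i:ℕ) := by
  rw [bAK, Basis.reindex_apply, pbK.basis_eq_pow]
  simp [pbK, AdjoinRoot.powerBasis_gen, Fin.coe_cast]
  rfl

noncomputable def secFA : BF →ₗ[Ltwo] AK :=
  bBF.constr Ltwo (fun i => (AdjoinRoot.root ((Polynomial.X : Polynomial Ltwo)^4))^(i:ℕ))

lemma pAB_root : pAB (AdjoinRoot.root ((Polynomial.X : Polynomial Ltwo)^4))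
    = AdjoinRoot.root ((Polynomial.X : Polynomial Ltwo)^2) := by
  rw [← AdjoinRoot.mk_X, pAB_mk, AdjoinRoot.mk_X]

lemma pAB_secFA (u : BF) : pAB (secFA u) = u := by
  have h : pAB.toLinearMap.comp secFA = LinearMap.id := by
    apply bBF.ext
    intro i
    rw [LinearMap.comp_apply, secFA, Basis.constr_basis, AlgHom.toLinearMap_apply, map_pow,
      pAB_root, LinearMap.id_apply, bBF_apply]
  exact DFunLike.congr_fun h u

noncomputable def jBA : BF →ₗ[Ltwo] AK :=
  (LinearMap.mulLeft Ltwo (A := AK) ((AdjoinRoot.root ((Polynomial.X : Polynomial Ltwo)^4))^2)).comp secFA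

lemma jBA_apply (u : BF) :
    jBA u = (AdjoinRoot.root ((Polynomial.X : Polynomial Ltwo)^4))^2 * secFA u := rfl

lemma jBA_key (v : AK) (u : BF) : jBA (pAB v * u) = v * jBA u := by
  have h2 : pAB (secFA (pAB v * u) - v * secFA u) = 0 := by
    rw [map_sub, pAB_secFA, map_mul, pAB_secFA, sub_self]
  have h3 := rootK_sq_ker h2
  rw [jBA_apply, jBA_apply]
  rw [mul_sub] at h3
  have h4 := sub_eq_zero.mp h3
  rw [h4]
  ring

lemma jBA_one : jBA 1 = (AdjoinRoot.root ((Polynomial.X : Polynomial Ltwo)^4))^2 := by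
  have h1 : (1 : BF) = bBF 0 := by rw [bBF_apply]; norm_num
  rw [jBA_apply, h1, secFA, Basis.constr_basis]
  norm_num

lemma jBA_pAB (v : AK) :
    jBA (pAB v) = (AdjoinRoot.root ((Polynomial.X : Polynomial Ltwo)^4))^2 * v := by
  have h := jBA_key v 1
  rw [mul_one, jBA_one] at h
  rw [h]; ring

lemma pAB_jBA (u : BF) : pAB (jBA u) = 0 := by
  rw [jBA_apply, map_mul, map_pow, pAB_root]
  rw [rootF_sq, zero_mul]

lemma jBA_inj : Function.Injective jBA := by
  rw [injective_iff_map_eq_zero]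
  intro u hu
  have hrepr := bBF.sum_repr u
  rw [Fin.sum_univ_two, bBF_apply, bBF_apply] at hrepr
  set c0 := bBF.repr u 0
  set c1 := bBF.repr u 1
  rw [← hrepr] at hu
  rw [jBA_apply, map_add, map_smul, map_smul] at hu
  have hsec : ∀ i : Fin 2, secFA (((AdjoinRoot.root ((Polynomial.X : Polynomial Ltwo)^2))^(i:ℕ)))
      = (AdjoinRoot.root ((Polynomial.X : Polynomial Ltwo)^4))^(i:ℕ) := by
    intro i
    rw [← bBF_apply, secFA, Basis.constr_basis]
  rw [hsec 0, hsec 1, fv2_0, fv2_1, pow_zero, pow_one] at hu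
  -- hu : root^2 * (c0 • 1 + c1 • root) = 0
  have hu2 : c0 • ((AdjoinRoot.root ((Polynomial.X : Polynomial Ltwo)^4))^2)
      + c1 • ((AdjoinRoot.root ((Polynomial.X : Polynomial Ltwo)^4))^3) = 0 := by
    rw [mul_add, mul_smul_comm, mul_smul_comm, mul_one] at hu
    have hr3 : (AdjoinRoot.root ((Polynomial.X : Polynomial Ltwo)^4))^2
        * AdjoinRoot.root ((Polynomial.X : Polynomial Ltwo)^4)
        = (AdjoinRoot.root ((Polynomial.X : Polynomial Ltwo)^4))^3 := by ring
    rwa [hr3] at hu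
  have hli := bAK.linearIndependent
  rw [Fintype.linearIndependent_iff] at hli
  have hz := hli ![0, 0, c0, c1] (by
    rw [Fin.sum_univ_four]
    simp only [Matrix.cons_val_zero, Matrix.cons_val_one, Matrix.head_cons,
      Matrix.cons_val_two, Matrix.tail_cons, Matrix.cons_val_three]
    rw [zero_smul, zero_smul, zero_add, zero_add, bAK_apply, bAK_apply]
    rw [fv4_2, fv4_3]
    exact hu2)
  have hc0 : c0 = 0 := hz 2
  have hc1 : c1 = 0 := hz 3
  rw [← hrepr, hc0, hc1, zero_smul, zero_smul, add_zero]

lemma exact_poly : ∀ w : AK, pAB w = 0 ↔ ∃ u, jBA u = w := by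
  intro w
  constructor
  · intro hw
    obtain ⟨r, rfl⟩ := ker_pAB hw
    refine ⟨pAB (AdjoinRoot.mk _ r), ?_⟩
    rw [jBA_pAB, ← AdjoinRoot.mk_X, ← map_pow, ← map_mul]
  · rintro ⟨u, rfl⟩
    exact pAB_jBA u

noncomputable def piA : AK →ₐ[Ltwo] Ltwo :=
  AdjoinRoot.liftHom _ 0 (by rw [map_pow, Polynomial.aeval_X]; norm_num)

lemma piA_mk (q : Polynomial Ltwo) : piA (AdjoinRoot.mk _ q) = q.eval 0 := by
  have h : piA (AdjoinRoot.mk _ q) = Polynomial.aeval (0:Ltwo) q := AdjoinRoot.liftHom_mk _ _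
  rw [h, ← Polynomial.coe_aeval_eq_eval]

lemma idem_zero {v : AK} (hv : v * v = v) (h0 : piA v = 0) : v = 0 := by
  obtain ⟨q, rfl⟩ := AdjoinRoot.mk_surjective v
  rw [piA_mk, ← Polynomial.coeff_zero_eq_eval_zero, ← Polynomial.X_dvd_iff] at h0
  obtain ⟨r, rfl⟩ := h0
  set m := AdjoinRoot.mk ((Polynomial.X : Polynomial Ltwo)^4) (Polynomial.X * r) with hm
  have h2 : m^2 = m := by rw [pow_two]; exact hv
  have h4 : m^4 = m := by
    have hx : m^4 = (m*m)*(m*m) := by ring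
    rw [hx, hv, hv]
  rw [← h4, hm, ← map_pow, AdjoinRoot.mk_eq_zero]
  exact ⟨r^4, by ring⟩

lemma alg_mem_closureX (P : Polynomial (ZMod 2)) :
    algebraMap (Polynomial (ZMod 2)) Ltwo P ∈ Subfield.closure {RatFunc.X} := by
  induction P using Polynomial.induction_on' with
  | add p q hp hq => rw [map_add]; exact Subfield.add_mem _ hp hq
  | monomial m a =>
    rw [← Polynomial.C_mul_X_pow_eq_monomial, map_mul, map_pow]
    rcases zmod2_cases a with h | h
    · subst h; rw [map_zero, map_zero, zero_mul]; exact Subfield.zero_mem _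
    · subst h; rw [map_one, map_one, one_mul, RatFunc.algebraMap_X]
      have hXm : RatFunc.X ∈ Subfield.closure {(RatFunc.X : Ltwo)} :=
        Subfield.subset_closure (Set.mem_singleton _)
      exact Subfield.pow_mem _ hXm m

lemma closureX_top : Subfield.closure {RatFunc.X} = (⊤ : Subfield Ltwo) := by
  rw [eq_top_iff]
  intro f _
  obtain ⟨p, q, hq, hdiv⟩ := IsFractionRing.div_surjective (A := Polynomial (ZMod 2)) f
  rw [← hdiv]
  exact Subfield.div_mem _ (alg_mem_closureX p) (alg_mem_closureX q)

noncomputable def eqSubfield {A : Type} [CommRing A] (f g : Ltwo →+* A) : Subfield Ltwo where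
  toSubring := RingHom.eqLocus f g
  inv_mem' := by
    intro x hx
    by_cases h0 : x = 0
    · subst h0
      rw [inv_zero]
      show f 0 = g 0
      rw [map_zero, map_zero]
    · show f x⁻¹ = g x⁻¹
      have hfx : f x = g x := hx
      have h1 : f x * f x⁻¹ = 1 := by rw [← map_mul, mul_inv_cancel₀ h0, map_one]
      have h2 : g x * g x⁻¹ = 1 := by rw [← map_mul, mul_inv_cancel₀ h0, map_one]
      calc f x⁻¹ = f x⁻¹ * (g x * g x⁻¹) := by rw [h2, mul_one]
        _ = (f x * f x⁻¹) * g x⁻¹ := by rw [hfx]; ring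
        _ = g x⁻¹ := by rw [h1, one_mul]

lemma mem_eqSubfield {A : Type} [CommRing A] (f g : Ltwo →+* A) (x : Ltwo) :
    x ∈ eqSubfield f g ↔ f x = g x := Iff.rfl

lemma psiK_val : psiK (AdjoinRoot.root ((Polynomial.X : Polynomial Ltwo)^4)
    - algebraMap Ltwo _ RatFunc.X) = (1:Ltwo) ⊗ₜ[Kbot] RatFunc.X := by
  have hcomm : psiK (algebraMap Ltwo _ RatFunc.X) = RatFunc.X ⊗ₜ[Kbot] 1 := by
    rw [AlgHom.commutes]
    rfl
  rw [map_sub psiK, psiK_root, hcomm, sigK]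
  abel

lemma psiF_val : psiF (AdjoinRoot.root ((Polynomial.X : Polynomial Ltwo)^2)
    - algebraMap Ltwo _ RatFunc.X) = (1:Ltwo) ⊗ₜ[Fmid] RatFunc.X := by
  have hcomm : psiF (algebraMap Ltwo _ RatFunc.X) = RatFunc.X ⊗ₜ[Fmid] 1 := by
    rw [AlgHom.commutes]
    rfl
  rw [map_sub psiF, psiF_root, hcomm, sigF]
  abel

noncomputable def Pmap : TK →ₐ[Ltwo] TF :=
  (eF.toAlgHom.comp pAB).comp eK.symm.toAlgHom

lemma Pmap_apply (x : TK) : Pmap x = eF (pAB (eK.symm x)) := rfl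

lemma eK_symm_one_tmul_X : eK.symm ((1:Ltwo) ⊗ₜ[Kbot] RatFunc.X)
    = AdjoinRoot.root ((Polynomial.X : Polynomial Ltwo)^4) - algebraMap Ltwo _ RatFunc.X := by
  rw [AlgEquiv.symm_apply_eq]
  exact psiK_val.symm

lemma Pmap_one_tmul (b : Ltwo) : Pmap ((1:Ltwo) ⊗ₜ[Kbot] b) = (1:Ltwo) ⊗ₜ[Fmid] b := by
  have hX : Pmap ((1:Ltwo) ⊗ₜ[Kbot] RatFunc.X) = (1:Ltwo) ⊗ₜ[Fmid] RatFunc.X := by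
    rw [Pmap_apply, eK_symm_one_tmul_X, map_sub, pAB_root, AlgHom.commutes]
    rw [show (eF (AdjoinRoot.root ((Polynomial.X : Polynomial Ltwo)^2)
      - algebraMap Ltwo _ RatFunc.X)) = psiF (AdjoinRoot.root ((Polynomial.X : Polynomial Ltwo)^2)
      - algebraMap Ltwo _ RatFunc.X) from rfl, psiF_val]
  set g1 : Ltwo →+* TF := Pmap.toRingHom.comp
    (Algebra.TensorProduct.includeRight (R := Kbot) (A := Ltwo) (B := Ltwo)).toRingHom with hg1
  set g2 : Ltwo →+* TF :=
    (Algebra.TensorProduct.includeRight (R := Fmid) (A := Ltwo) (B := Ltwo)).toRingHom with hg2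
  have hsub : Subfield.closure {RatFunc.X} ≤ eqSubfield g1 g2 := by
    rw [Subfield.closure_le]
    intro x hx
    rw [Set.mem_singleton_iff] at hx
    subst hx
    show g1 RatFunc.X = g2 RatFunc.X
    exact hX
  have hb : b ∈ eqSubfield g1 g2 := by
    apply hsub
    rw [closureX_top]
    trivial
  exact hb

lemma Pmap_tmul (a b : Ltwo) : Pmap (a ⊗ₜ[Kbot] b) = a ⊗ₜ[Fmid] b := by
  have h1 : a ⊗ₜ[Kbot] b = a • ((1:Ltwo) ⊗ₜ[Kbot] b) := by
    rw [TensorProduct.smul_tmul', smul_eq_mul, mul_one]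
  have h2 : a ⊗ₜ[Fmid] b = a • ((1:Ltwo) ⊗ₜ[Fmid] b) := by
    rw [TensorProduct.smul_tmul', smul_eq_mul, mul_one]
  have h3 := Pmap.toLinearMap.map_smul a ((1:Ltwo) ⊗ₜ[Kbot] b)
  rw [h1, h2]
  have h4 : Pmap.toLinearMap (a • ((1:Ltwo) ⊗ₜ[Kbot] b)) = Pmap (a • ((1:Ltwo) ⊗ₜ[Kbot] b)) := rfl
  rw [← h4, h3]
  show a • Pmap ((1:Ltwo) ⊗ₜ[Kbot] b) = _
  rw [Pmap_one_tmul]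

lemma eK_root_sq : eK ((AdjoinRoot.root ((Polynomial.X : Polynomial Ltwo)^4))^2) = sigK^2 := by
  rw [eK_apply, map_pow, psiK_root]

lemma rootK_sq_ne : (AdjoinRoot.root ((Polynomial.X : Polynomial Ltwo)^4))^2 ≠ 0 := by
  have hb := bAK.ne_zero 2
  rwa [bAK_apply, fv4_2] at hb


/-- With `L = 𝔽₂(t)`, `F = 𝔽₂(t²)`, `K = 𝔽₂(t⁴)`:
(1) `L ⊗_K L` is isomorphic as an `L`-algebra to `L[X]/(X⁴)` with `X ↦ t⊗1 + 1⊗t`;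
(2) the sequence of `(L,L)`-bimodules `0 → L ⊗_F L → L ⊗_K L → L ⊗_F L → 0`, with first
map sending `1⊗1` to `t²⊗1 + 1⊗t²` and second map sending `1⊗1` to `1⊗1` (both maps of
`(L,L)`-bimodules, i.e. `L`-linear and commuting with multiplication by the elements
`a ⊗ b`), is exact and does not split;
(3) `L ⊗_K L` is an indecomposable `(L,L)`-bimodule (equivalently, since its bimodule
decompositions correspond to its idempotents, it has no nontrivial idempotents). -/
theorem function_field_tensor_nonsplit :
    -- (1) the `L`-algebra isomorphism `L[X]/(X⁴) ≅ L ⊗[K] L`, `X ↦ t⊗1 + 1⊗t`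
    (∃ e : (Polynomial Ltwo ⧸ Ideal.span {(Polynomial.X : Polynomial Ltwo) ^ 4})
        ≃ₐ[Ltwo] (TensorProduct Kbot Ltwo Ltwo),
      e (Ideal.Quotient.mk _ Polynomial.X)
        = RatFunc.X ⊗ₜ[Kbot] 1 + 1 ⊗ₜ[Kbot] RatFunc.X) ∧
    -- (2) the exact, non-split sequence of `(L,L)`-bimodules
    (∃ (j : TensorProduct Fmid Ltwo Ltwo →ₗ[Ltwo] TensorProduct Kbot Ltwo Ltwo)
        (p : TensorProduct Kbot Ltwo Ltwo →ₗ[Ltwo] TensorProduct Fmid Ltwo Ltwo),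
      j (1 ⊗ₜ[Fmid] 1) = (RatFunc.X ^ 2) ⊗ₜ[Kbot] 1 + 1 ⊗ₜ[Kbot] (RatFunc.X ^ 2) ∧
      p (1 ⊗ₜ[Kbot] 1) = 1 ⊗ₜ[Fmid] 1 ∧
      (∀ (a b : Ltwo) (x : TensorProduct Fmid Ltwo Ltwo),
        j ((a ⊗ₜ[Fmid] b) * x) = (a ⊗ₜ[Kbot] b) * j x) ∧
      (∀ (a b : Ltwo) (x : TensorProduct Kbot Ltwo Ltwo),
        p ((a ⊗ₜ[Kbot] b) * x) = (a ⊗ₜ[Fmid] b) * p x) ∧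
      Function.Injective j ∧ Function.Surjective p ∧
      LinearMap.range j = LinearMap.ker p ∧
      ¬ ∃ s : TensorProduct Fmid Ltwo Ltwo →ₗ[Ltwo] TensorProduct Kbot Ltwo Ltwo,
        (∀ (a b : Ltwo) (x : TensorProduct Fmid Ltwo Ltwo),
          s ((a ⊗ₜ[Fmid] b) * x) = (a ⊗ₜ[Kbot] b) * s x) ∧
        p.comp s = LinearMap.id) ∧
    -- (3) `L ⊗[K] L` is indecomposable: it has no nontrivial idempotents
    (∀ e : TensorProduct Kbot Ltwo Ltwo, e * e = e → e = 0 ∨ e = 1) := by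
  -- the maps
  set jmap : TF →ₗ[Ltwo] TK := (eK.toLinearMap.comp jBA).comp eF.symm.toLinearMap with hjmapdef
  set pmap : TK →ₗ[Ltwo] TF := Pmap.toLinearMap with hpmapdef
  have jmap_apply : ∀ x, jmap x = eK (jBA (eF.symm x)) := fun x => rfl
  have pmap_apply : ∀ x, pmap x = eF (pAB (eK.symm x)) := fun x => rfl
  have c1 : jmap (1 ⊗ₜ[Fmid] 1) = (RatFunc.X ^ 2) ⊗ₜ[Kbot] 1 + 1 ⊗ₜ[Kbot] (RatFunc.X ^ 2) := by
    have h11 : (1:Ltwo) ⊗ₜ[Fmid] (1:Ltwo) = (1 : TF) := (Algebra.TensorProduct.one_def).symm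
    rw [jmap_apply, h11, map_one, jBA_one, eK_root_sq, sigK_sq]
  have c2 : pmap (1 ⊗ₜ[Kbot] 1) = 1 ⊗ₜ[Fmid] 1 := Pmap_tmul 1 1
  have c3 : ∀ (a b : Ltwo) (x : TF), jmap ((a ⊗ₜ[Fmid] b) * x) = (a ⊗ₜ[Kbot] b) * jmap x := by
    intro a b x
    have hv : pAB (eK.symm (a ⊗ₜ[Kbot] b)) = eF.symm (a ⊗ₜ[Fmid] b) := by
      rw [← Pmap_tmul a b, Pmap_apply, AlgEquiv.symm_apply_apply]
    rw [jmap_apply, jmap_apply, map_mul (eF.symm), ← hv, jBA_key, map_mul eK,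
      AlgEquiv.apply_symm_apply]
  have c4 : ∀ (a b : Ltwo) (x : TK), pmap ((a ⊗ₜ[Kbot] b) * x) = (a ⊗ₜ[Fmid] b) * pmap x := by
    intro a b x
    rw [pmap_apply, pmap_apply]
    show Pmap _ = _ * Pmap _
    rw [map_mul Pmap, Pmap_tmul]
  have c5 : Function.Injective jmap := by
    intro x y hxy
    have hxy' : eK (jBA (eF.symm x)) = eK (jBA (eF.symm y)) := hxy
    exact eF.symm.injective (jBA_inj (eK.injective hxy'))
  have c6 : Function.Surjective pmap := by
    intro y
    obtain ⟨u, hu⟩ := pAB_surj (eF.symm y)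
    refine ⟨eK u, ?_⟩
    rw [pmap_apply, AlgEquiv.symm_apply_apply, hu, AlgEquiv.apply_symm_apply]
  have c7 : LinearMap.range jmap = LinearMap.ker pmap := by
    ext x
    rw [LinearMap.mem_range, LinearMap.mem_ker]
    constructor
    · rintro ⟨u, rfl⟩
      rw [pmap_apply, jmap_apply, AlgEquiv.symm_apply_apply, pAB_jBA, map_zero]
    · intro hx
      have hx' : pAB (eK.symm x) = 0 := by
        apply eF.injective
        rw [map_zero]
        exact hx
      obtain ⟨u, hu⟩ := (exact_poly (eK.symm x)).mp hx'
      refine ⟨eF u, ?_⟩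
      rw [jmap_apply, AlgEquiv.symm_apply_apply, hu, AlgEquiv.apply_symm_apply]
  have c8 : ¬ ∃ s : TF →ₗ[Ltwo] TK,
      (∀ (a b : Ltwo) (x : TF), s ((a ⊗ₜ[Fmid] b) * x) = (a ⊗ₜ[Kbot] b) * s x) ∧
      pmap.comp s = LinearMap.id := by
    rintro ⟨s, hs1, hs2⟩
    set w := s ((1:Ltwo) ⊗ₜ[Fmid] 1) with hwdef
    have hw : pmap w = (1:Ltwo) ⊗ₜ[Fmid] 1 := by
      have h := DFunLike.congr_fun hs2 ((1:Ltwo) ⊗ₜ[Fmid] 1)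
      rwa [LinearMap.comp_apply, LinearMap.id_apply] at h
    have hstep : ∀ x, s (sigF * x) = sigK * s x := by
      intro x
      rw [sigF, add_mul, map_add, hs1 RatFunc.X 1, hs1 1 RatFunc.X, sigK, add_mul]
    have hzero : sigK * (sigK * w) = 0 := by
      have h1 : sigF * (sigF * ((1:Ltwo) ⊗ₜ[Fmid] 1)) = 0 := by
        have h2 : sigF * (sigF * ((1:Ltwo) ⊗ₜ[Fmid] 1)) = sigF^2 * ((1:Ltwo) ⊗ₜ[Fmid] 1) := by
          ring
        rw [h2, sigF_sq, zero_mul]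
      calc sigK * (sigK * w) = s (sigF * (sigF * ((1:Ltwo) ⊗ₜ[Fmid] 1))) := by
            rw [hstep, hstep]
        _ = 0 := by rw [h1, map_zero]
    have hker : pmap (w - (1:Ltwo) ⊗ₜ[Kbot] 1) = 0 := by
      rw [map_sub, hw, c2, sub_self]
    obtain ⟨u, hu⟩ : ∃ u, jmap u = w - (1:Ltwo) ⊗ₜ[Kbot] 1 := by
      have hmem : w - (1:Ltwo) ⊗ₜ[Kbot] 1 ∈ LinearMap.range jmap := by
        rw [c7, LinearMap.mem_ker]
        exact hker
      exact hmem
    have hannih : sigK^2 * jmap u = 0 := by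
      have hFzero : (RatFunc.X^2) ⊗ₜ[Fmid] (1:Ltwo) + (1:Ltwo) ⊗ₜ[Fmid] (RatFunc.X^2) = 0 := by
        have hmemF : (RatFunc.X : Ltwo)^2 ∈ Fmid := Subfield.subset_closure rfl
        have hcF : ((RatFunc.X : Ltwo)^2) ⊗ₜ[Fmid] (1:Ltwo)
            = (1:Ltwo) ⊗ₜ[Fmid] ((RatFunc.X : Ltwo)^2) := by
          simpa using tmul_comm_F hmemF 1 1
        rw [hcF]
        exact double_eq_zero_F _
      rw [sigK_sq, add_mul, ← c3 (RatFunc.X^2) 1 u, ← c3 1 (RatFunc.X^2) u, ← map_add jmap,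
        ← add_mul, hFzero, zero_mul, map_zero]
    have hfin : sigK^2 = 0 := by
      have h2 : sigK * (sigK * w)
          = sigK^2 * ((1:Ltwo) ⊗ₜ[Kbot] 1) + sigK^2 * (w - (1:Ltwo) ⊗ₜ[Kbot] 1) := by ring
      rw [h2, ← hu, hannih, add_zero] at hzero
      rwa [show (1:Ltwo) ⊗ₜ[Kbot] (1:Ltwo) = (1:TK) from (Algebra.TensorProduct.one_def).symm,
        mul_one] at hzero
    exact rootK_sq_ne (eK.injective (by rw [eK_root_sq, hfin, map_zero]))
  refine ⟨⟨eK, ?_⟩, ⟨jmap, pmap, c1, c2, c3, c4, c5, c6, c7, c8⟩, ?_⟩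
  · show eK (AdjoinRoot.root ((Polynomial.X : Polynomial Ltwo)^4)) = _
    rw [eK_apply, psiK_root, sigK]
  · intro e he
    set u := eK.symm e with hudef
    have huu : u * u = u := by rw [hudef, ← map_mul, he]
    set c := piA u with hcdef
    have hcc : c * c = c := by rw [hcdef, ← map_mul, huu]
    have heq : e = eK u := (eK.apply_symm_apply e).symm
    have hc01 : c = 0 ∨ c = 1 := by
      rcases mul_eq_zero.mp (show c * (c - 1) = 0 by linear_combination hcc) with h | h
      · exact Or.inl h
      · exact Or.inr (by linear_combination h)
    rcases hc01 with h | h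
    · left
      rw [heq, idem_zero huu h, map_zero]
    · right
      have h1 : (1 - u) * (1 - u) = 1 - u := by linear_combination huu
      have h2 : piA (1 - u) = 0 := by rw [map_sub, map_one, ← hcdef, h, sub_self]
      have h3 := idem_zero h1 h2
      have h4 : u = 1 := by linear_combination -h3
      rw [heq, h4, map_one]
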